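/- Filon quadrature error is uniform in the frequency (equation (2.10) of the paper): let h > 0 and let f : ℝ → E be three times continuously differentiable on [0,h] with derivatives f', f'', f'''. Define p(s) := ((f'(h) − f'(0))/(2h)) · s² + f'(0) · s + f(0). Then for every ω ∈ ℝ, ‖∫₀ʰ (f(s) − p(s)) · e^{iωs} ds‖ ≤ (h⁴/4) · sup_{ξ∈[0,h]} ‖f'''(ξ)‖; in particular the bound is independent of ω. -/

import Mathlib

open Set MeasureTheory

/-- **equation (2.10), Filon quadrature error is uniform in the frequency.**
If `f` is three times continuously differentiable on `[0,h]` and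
`p(s) := ((f'(h) − f'(0))/(2h))·s² + f'(0)·s + f(0)`, then for every `ω ∈ ℝ`,
`‖∫₀ʰ (f(s) − p(s))·e^{iωs} ds‖ ≤ (h⁴/4)·sup_{[0,h]}‖f'''‖`; the bound is independent
of `ω`. -/
theorem filon_quadrature_error_uniform_in_frequency
    {E : Type*} [NormedAddCommGroup E] [NormedSpace ℂ E] [CompleteSpace E]
    (h : ℝ) (hh : 0 < h) (f f' f'' f''' : ℝ → E)
    (hd1 : ∀ s ∈ Set.Icc (0 : ℝ) h, HasDerivAt f (f' s) s)
    (hd2 : ∀ s ∈ Set.Icc (0 : ℝ) h, HasDerivAt f' (f'' s) s)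
    (hd3 : ∀ s ∈ Set.Icc (0 : ℝ) h, HasDerivAt f'' (f''' s) s)
    (hcont : ContinuousOn f''' (Set.Icc (0 : ℝ) h)) :
    ∀ ω : ℝ,
      ‖∫ s in (0:ℝ)..h,
          Complex.exp (Complex.I * (ω : ℂ) * (s : ℂ)) •
            (f s - ((s ^ 2 / (2 * h)) • (f' h - f' 0) + s • f' 0 + f 0))‖ ≤
        (h ^ 4 / 4) * ⨆ ξ : Set.Icc (0 : ℝ) h, ‖f''' ξ‖ := by
  intro ω
  have h0mem : (0:ℝ) ∈ Icc (0:ℝ) h := ⟨le_refl 0, hh.le⟩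
  have hne : (Icc (0:ℝ) h).Nonempty := ⟨0, h0mem⟩
  set M : ℝ := ⨆ ξ : Set.Icc (0 : ℝ) h, ‖f''' ξ‖ with hMdef
  obtain ⟨C, hC⟩ : BddAbove ((fun t => ‖f''' t‖) '' Icc (0:ℝ) h) :=
    (isCompact_Icc.image_of_continuousOn hcont.norm).bddAbove
  have hbdd : BddAbove (Set.range fun ξ : Set.Icc (0:ℝ) h => ‖f''' ξ‖) := by
    refine ⟨C, ?_⟩
    rintro x ⟨ξ, rfl⟩
    exact hC ⟨ξ, ξ.2, rfl⟩
  have hM : ∀ t ∈ Icc (0:ℝ) h, ‖f''' t‖ ≤ M := fun t ht =>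
    le_ciSup hbdd (⟨t, ht⟩ : Icc (0:ℝ) h)
  have hM0 : 0 ≤ M := le_trans (norm_nonneg _) (hM 0 h0mem)
  -- Step A : `‖f'' t - f'' 0‖ ≤ M * t` on `[0, h]`
  have hA : ∀ t ∈ Icc (0:ℝ) h, ‖f'' t - f'' 0‖ ≤ M * t := by
    intro t ht
    have := norm_image_sub_le_of_norm_deriv_right_le_segment
      (f := f'') (f' := f''') (a := 0) (b := h)
      (fun s hs => (hd3 s hs).continuousAt.continuousWithinAt)
      (fun x hx => (hd3 x (Ico_subset_Icc_self hx)).hasDerivWithinAt)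
      (fun x hx => hM x (Ico_subset_Icc_self hx)) t ht
    simpa using this
  -- Step B : `φ s = f' s - f' 0 - s • f'' 0` satisfies `‖φ s‖ ≤ (M/2) * s^2`
  set φ : ℝ → E := fun s => f' s - f' 0 - s • f'' 0 with hφdef
  have hφderiv : ∀ x ∈ Icc (0:ℝ) h, HasDerivAt φ (f'' x - f'' 0) x := by
    intro x hx
    have h1 : HasDerivAt (fun s : ℝ => s • f'' 0) ((1:ℝ) • f'' 0) x :=
      (hasDerivAt_id x).smul_const (f'' 0)
    simpa [hφdef, one_smul, Pi.sub_def] using ((hd2 x hx).sub_const (f' 0)).sub h1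
  have hφ : ∀ x ∈ Icc (0:ℝ) h, ‖φ x‖ ≤ (M / 2) * x ^ 2 := by
    have hB : ∀ x : ℝ, HasDerivAt (fun s => (M / 2) * s ^ 2) (M * x) x := by
      intro x
      have := (hasDerivAt_pow 2 x).const_mul (M / 2)
      refine this.congr_deriv ?_
      push_cast
      ring
    refine fun x hx =>
      image_norm_le_of_norm_deriv_right_le_deriv_boundary
        (f := φ) (f' := fun s => f'' s - f'' 0) (a := 0) (b := h)
        (fun s hs => ((hφderiv s hs).continuousAt).continuousWithinAt)
        (fun s hs => (hφderiv s (Ico_subset_Icc_self hs)).hasDerivWithinAt)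
        ?_ hB (fun s hs => hA s (Ico_subset_Icc_self hs)) hx
    simp [hφdef]
  -- Step C : the error function g and its derivative
  set g : ℝ → E := fun s =>
    f s - ((s ^ 2 / (2 * h)) • (f' h - f' 0) + s • f' 0 + f 0) with hgdef
  have hgderiv : ∀ x ∈ Icc (0:ℝ) h,
      HasDerivAt g (φ x - (x / h) • φ h) x := by
    intro x hx
    have h1 : HasDerivAt (fun s : ℝ => s ^ 2 / (2 * h)) (x / h) x := by
      have := (hasDerivAt_pow 2 x).div_const (2 * h)
      refine this.congr_deriv ?_
      field_simp
      ring
    have h2 : HasDerivAt (fun s : ℝ => (s ^ 2 / (2 * h)) • (f' h - f' 0))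
        ((x / h) • (f' h - f' 0)) x := h1.smul_const _
    have h3 : HasDerivAt (fun s : ℝ => s • f' 0) ((1:ℝ) • f' 0) x :=
      (hasDerivAt_id x).smul_const (f' 0)
    have h4 : HasDerivAt g (f' x - ((x / h) • (f' h - f' 0) + (1:ℝ) • f' 0)) x :=
      (hd1 x hx).sub ((h2.add h3).add_const (f 0))
    have key : f' x - ((x / h) • (f' h - f' 0) + (1:ℝ) • f' 0)
        = φ x - (x / h) • φ h := by
      simp only [hφdef, one_smul, smul_sub, smul_smul]
      have : (x / h) * h = x := by field_simp
      rw [this]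
      abel
    rw [key] at h4
    exact h4
  have hg' : ∀ x ∈ Ico (0:ℝ) h, ‖φ x - (x / h) • φ h‖ ≤ M * h * x := by
    intro x hx
    have hx' : x ∈ Icc (0:ℝ) h := Ico_subset_Icc_self hx
    have b1 : ‖φ x‖ ≤ (M / 2) * x ^ 2 := hφ x hx'
    have b2 : ‖(x / h) • φ h‖ ≤ (x / h) * ((M / 2) * h ^ 2) := by
      rw [norm_smul, Real.norm_eq_abs, abs_of_nonneg (div_nonneg hx'.1 hh.le)]
      exact mul_le_mul_of_nonneg_left (hφ h ⟨hh.le, le_refl h⟩)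
        (div_nonneg hx'.1 hh.le)
    calc ‖φ x - (x / h) • φ h‖ ≤ ‖φ x‖ + ‖(x / h) • φ h‖ := norm_sub_le _ _
      _ ≤ (M / 2) * x ^ 2 + (x / h) * ((M / 2) * h ^ 2) := add_le_add b1 b2
      _ = (M / 2) * (x ^ 2 + x * h) := by field_simp
      _ ≤ M * h * x := by
          nlinarith [mul_nonneg hM0 (mul_nonneg hx'.1 (sub_nonneg.2 hx'.2)),
            mul_nonneg hM0 hx'.1]
  -- Step D : `‖g x‖ ≤ (M * h / 2) * x ^ 2`
  have hg : ∀ x ∈ Icc (0:ℝ) h, ‖g x‖ ≤ (M * h / 2) * x ^ 2 := by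
    have hB : ∀ x : ℝ, HasDerivAt (fun s => (M * h / 2) * s ^ 2) (M * h * x) x := by
      intro x
      have := (hasDerivAt_pow 2 x).const_mul (M * h / 2)
      refine this.congr_deriv ?_
      push_cast
      ring
    refine fun x hx =>
      image_norm_le_of_norm_deriv_right_le_deriv_boundary
        (f := g) (f' := fun s => φ s - (s / h) • φ h) (a := 0) (b := h)
        (fun s hs => ((hgderiv s hs).continuousAt).continuousWithinAt)
        (fun s hs => (hgderiv s (Ico_subset_Icc_self hs)).hasDerivWithinAt)
        ?_ hB hg' hx
    simp [hgdef]
  -- Step E : bound the oscillatory integral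
  have hnorm : ∀ s ∈ Icc (0:ℝ) h,
      ‖Complex.exp (Complex.I * (ω : ℂ) * (s : ℂ)) • g s‖ ≤ (M * h / 2) * s ^ 2 := by
    intro s hs
    rw [norm_smul]
    have he : Complex.I * (ω : ℂ) * (s : ℂ) = ((ω * s : ℝ) : ℂ) * Complex.I := by
      push_cast; ring
    rw [he, Complex.norm_exp_ofReal_mul_I, one_mul]
    exact hg s hs
  have hint : ‖∫ s in (0:ℝ)..h,
      Complex.exp (Complex.I * (ω : ℂ) * (s : ℂ)) • g s‖ ≤
      |∫ s in (0:ℝ)..h, (M * h / 2) * s ^ 2| := by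
    refine intervalIntegral.norm_integral_le_abs_of_norm_le ?_ ?_
    · rw [Set.uIoc_of_le hh.le]
      filter_upwards [ae_restrict_mem measurableSet_Ioc] with s hs
      exact hnorm s (Ioc_subset_Icc_self hs)
    · exact (continuous_const.mul (continuous_pow 2)).intervalIntegrable _ _
  have hval : (∫ s in (0:ℝ)..h, (M * h / 2) * s ^ 2) = M * h ^ 4 / 6 := by
    rw [intervalIntegral.integral_const_mul, integral_pow]
    ring
  calc ‖∫ s in (0:ℝ)..h, Complex.exp (Complex.I * (ω : ℂ) * (s : ℂ)) • g s‖
      ≤ |∫ s in (0:ℝ)..h, (M * h / 2) * s ^ 2| := hint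
    _ = M * h ^ 4 / 6 := by
        rw [hval, abs_of_nonneg]; positivity
    _ ≤ (h ^ 4 / 4) * M := by nlinarith [pow_nonneg hh.le 4, hM0]
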